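/- Let C ⊆ F_q^s be a k-dimensional linear code and C⊥ its dual with respect to the standard inner product, of dimension k⊥ = s - k. Then the code C_o = {(v, flip(u)) : v ∈ C, u ∈ C⊥} ⊆ F_q^{2s} is self-orthogonal of dimension k + k⊥ = s with respect to the NRT inner product on M_{1,2s}(F_q), i.e., ⟨x, y⟩_N = 0 for all x, y ∈ C_o. -/

import Mathlib

open Finset

/-- The standard inner product bilinear form on `F^m`. -/
def stdForm (F : Type*) [Field F] (m : ℕ) : LinearMap.BilinForm F (Fin m → F) :=
  LinearMap.mk₂ F (fun u v => ∑ j, u j * v j)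
    (by intro u u' v; simp [add_mul, Finset.sum_add_distrib])
    (by intro c u v; simp [smul_eq_mul, Finset.mul_sum, mul_assoc])
    (by intro u v v'; simp [mul_add, Finset.sum_add_distrib])
    (by intro c u v; simp [smul_eq_mul, Finset.mul_sum, mul_left_comm])

/-- The NRT bilinear form on `F^m = M_{1,m}(F)`: `⟨x,y⟩_N = Σ_j x_j y_{m+1-j}`. -/
def nrtForm (F : Type*) [Field F] (m : ℕ) : LinearMap.BilinForm F (Fin m → F) :=
  LinearMap.mk₂ F (fun u v => ∑ j, u j * v j.rev)
    (by intro u u' v; simp [add_mul, Finset.sum_add_distrib])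
    (by intro c u v; simp [smul_eq_mul, Finset.mul_sum, mul_assoc])
    (by intro u v v'; simp [mul_add, Finset.sum_add_distrib])
    (by intro c u v; simp [smul_eq_mul, Finset.mul_sum, mul_left_comm])

/-- The flip of a vector: `flip (v_1, …, v_s) = (v_s, …, v_1)`. -/
def flipVec {F : Type*} {s : ℕ} (v : Fin s → F) : Fin s → F := fun j => v j.rev

section Aux

variable (F : Type*) [Field F] (s : ℕ)

lemma append_addNat {α : Type*} (a b : Fin s → α) (j : Fin s) :
    Fin.append a b (j.addNat s) = b j := by
  rw [← Fin.natAdd_eq_addNat, Fin.append_right]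

/-- The linear map `(v, u) ↦ (v, flip u)` into `F^{2s}`. -/
def appendFlipL : ((Fin s → F) × (Fin s → F)) →ₗ[F] (Fin (s + s) → F) where
  toFun p := Fin.append p.1 (flipVec p.2)
  map_add' p q := by
    funext i
    induction i using Fin.addCases with
    | left j => simp [Fin.append_left, flipVec]
    | right j => simp [append_addNat, flipVec]
  map_smul' c p := by
    funext i
    induction i using Fin.addCases with
    | left j => simp [Fin.append_left, flipVec]
    | right j => simp [append_addNat, flipVec]

lemma appendFlipL_injective : Function.Injective (appendFlipL F s) := by
  rw [← LinearMap.ker_eq_bot, eq_bot_iff]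
  rintro ⟨v, u⟩ h
  simp only [LinearMap.mem_ker, appendFlipL, LinearMap.coe_mk, AddHom.coe_mk] at h
  have hv : v = 0 := by
    funext j
    have := congrFun h (Fin.castAdd s j)
    simpa [Fin.append_left] using this
  have hu : u = 0 := by
    funext j
    have := congrFun h (Fin.natAdd s j.rev)
    simpa [Fin.append_right, Fin.natAdd_eq_addNat, append_addNat, flipVec] using this
  simp [hv, hu, Prod.ext_iff]

lemma rev_castAdd' (j : Fin s) : (Fin.castAdd s j).rev = Fin.natAdd s j.rev := by
  ext
  simp [Fin.val_rev]
  omega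

lemma rev_natAdd' (j : Fin s) : (Fin.natAdd s j).rev = Fin.castAdd s j.rev := by
  ext
  simp [Fin.val_rev]
  omega

lemma nrt_append (v u v' u' : Fin s → F) :
    nrtForm F (s + s) (Fin.append v (flipVec u)) (Fin.append v' (flipVec u')) =
      (∑ j, v j * u' j) + (∑ j, v' j * u j) := by
  have h : nrtForm F (s + s) (Fin.append v (flipVec u)) (Fin.append v' (flipVec u')) =
      ∑ i : Fin (s + s), Fin.append v (flipVec u) i * Fin.append v' (flipVec u') i.rev := rfl
  rw [h, Fin.sum_univ_add]
  congr 1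
  · refine Finset.sum_congr rfl fun j _ => ?_
    rw [rev_castAdd', Fin.append_left, Fin.append_right]
    simp [flipVec]
  · rw [show (∑ j, v' j * u j) = ∑ j : Fin s, v' j.rev * u j.rev from
      (Fintype.sum_equiv (Fin.revPerm) _ _ (fun j => by simp)).symm]
    refine Finset.sum_congr rfl fun j _ => ?_
    rw [rev_natAdd', Fin.append_left, Fin.append_right]
    simp [flipVec, mul_comm]

lemma stdForm_isRefl : (stdForm F s).IsRefl := by
  intro x y h
  simpa [stdForm, mul_comm] using h

lemma stdForm_nondeg : (stdForm F s).Nondegenerate := by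
  refine ⟨?_, ?_⟩ <;> intro v h <;> funext j
  all_goals
    have := h (Pi.single j 1)
    simpa [stdForm, Pi.single_apply, mul_ite, ite_mul, Finset.sum_ite_eq', Finset.sum_ite_eq] using this

end Aux

/-- From a code `C` and its standard dual `C⊥`, the code
`C_o = {(v, flip u) : v ∈ C, u ∈ C⊥} ⊆ F^{2s}` is self-orthogonal of dimension
`dim C + dim C⊥ = s` with respect to the NRT inner product. -/
theorem flip_construction_selfOrthogonal (F : Type*) [Field F] [Fintype F] (s : ℕ)
    (C : Submodule F (Fin s → F)) (Cperp : Submodule F (Fin s → F))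
    (hperp : Cperp = (stdForm F s).orthogonal C)
    (Co : Submodule F (Fin (s + s) → F))
    (hCo : (Co : Set (Fin (s + s) → F)) =
      {x | ∃ v ∈ C, ∃ u ∈ Cperp, x = Fin.append v (flipVec u)}) :
    (∀ x ∈ Co, ∀ y ∈ Co, nrtForm F (s + s) x y = 0) ∧
    Module.finrank F Co = Module.finrank F C + Module.finrank F Cperp ∧
    Module.finrank F Co = s := by
  have hmem : ∀ x, x ∈ Co ↔ ∃ v ∈ C, ∃ u ∈ Cperp, x = Fin.append v (flipVec u) := by
    intro x
    rw [← SetLike.mem_coe, hCo]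
    rfl
  have hortho : ∀ x ∈ Co, ∀ y ∈ Co, nrtForm F (s + s) x y = 0 := by
    intro x hx y hy
    obtain ⟨v, hv, u, hu, rfl⟩ := (hmem x).mp hx
    obtain ⟨v', hv', u', hu', rfl⟩ := (hmem y).mp hy
    rw [nrt_append]
    have h1 : (∑ j, v j * u' j) = 0 := by
      rw [hperp] at hu'
      exact (LinearMap.BilinForm.mem_orthogonal_iff.mp hu') v hv
    have h2 : (∑ j, v' j * u j) = 0 := by
      rw [hperp] at hu
      exact (LinearMap.BilinForm.mem_orthogonal_iff.mp hu) v' hv'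
    rw [h1, h2, add_zero]
  have hmap : Co = Submodule.map (appendFlipL F s) (C.prod Cperp) := by
    ext x
    rw [hmem, Submodule.mem_map]
    constructor
    · rintro ⟨v, hv, u, hu, rfl⟩
      exact ⟨(v, u), ⟨hv, hu⟩, rfl⟩
    · rintro ⟨⟨v, u⟩, ⟨hv, hu⟩, rfl⟩
      exact ⟨v, hv, u, hu, rfl⟩
  have e1 : Module.finrank F Co = Module.finrank F (C.prod Cperp) := by
    rw [hmap]
    exact (LinearEquiv.finrank_eq
      (Submodule.equivMapOfInjective _ (appendFlipL_injective F s) (C.prod Cperp))).symm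
  have e2 : Module.finrank F (C.prod Cperp) =
      Module.finrank F C + Module.finrank F Cperp := by
    have e : (C.prod Cperp) ≃ₗ[F] (C × Cperp) :=
      { toFun := fun x => (⟨x.1.1, x.2.1⟩, ⟨x.1.2, x.2.2⟩)
        invFun := fun p => ⟨(p.1.1, p.2.1), ⟨p.1.2, p.2.2⟩⟩
        left_inv := fun x => rfl
        right_inv := fun p => rfl
        map_add' := fun x y => rfl
        map_smul' := fun c x => rfl }
    rw [LinearEquiv.finrank_eq e, Module.finrank_prod]
  have e3 : Module.finrank F C + Module.finrank F Cperp = s := by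
    rw [hperp]
    have := LinearMap.BilinForm.finrank_add_finrank_orthogonal
      (B := stdForm F s) (stdForm_isRefl F s) C
    rwa [LinearMap.BilinForm.orthogonal_top_eq_bot (stdForm_nondeg F s),
      inf_bot_eq, finrank_bot, add_zero, Module.finrank_fin_fun] at this
  exact ⟨hortho, e1.trans e2, (e1.trans e2).trans e3⟩
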